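/- Let Φ ∈ ℝ^{M×N} have restricted isometry constant δ_s of order s. Let u ∈ ℝ^N and let S ⊆ {1,…,N} be such that |S ∪ supp(u)| ≤ s. Then ‖((I − ΦᵀΦ)u)_S‖ ≤ δ_s·‖u‖, where I is the N×N identity matrix. -/
import Mathlib


open Finset

noncomputable section

/-- The Euclidean (ℓ₂) norm of a vector in `Fin n → ℝ`. -/
def l2norm {n : ℕ} (v : Fin n → ℝ) : ℝ := Real.sqrt (∑ i, (v i) ^ 2)

/-- The sparsity `‖v‖₀` of a vector: the number of its nonzero entries. -/
def sparsity {n : ℕ} (v : Fin n → ℝ) : ℕ := (Finset.univ.filter fun i => v i ≠ 0).card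

/-- The support of a vector, as a `Finset`. -/
def suppF {n : ℕ} (v : Fin n → ℝ) : Finset (Fin n) := Finset.univ.filter fun i => v i ≠ 0

/-- `restr v S` is the vector agreeing with `v` on `S` and zero outside `S`. -/
def restr {n : ℕ} (v : Fin n → ℝ) (S : Finset (Fin n)) : Fin n → ℝ :=
  fun i => if i ∈ S then v i else 0

/-- `Φ` has restricted isometry constant `δ < 1` of order `s`:
`(1-δ)‖z‖² ≤ ‖Φz‖² ≤ (1+δ)‖z‖²` for every `s`-sparse `z`. -/
def HasRIC {M N : ℕ} (Φ : Matrix (Fin M) (Fin N) ℝ) (s : ℕ) (δ : ℝ) : Prop :=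
  δ < 1 ∧ ∀ z : Fin N → ℝ, sparsity z ≤ s →
    (1 - δ) * (l2norm z) ^ 2 ≤ (l2norm (Φ.mulVec z)) ^ 2 ∧
      (l2norm (Φ.mulVec z)) ^ 2 ≤ (1 + δ) * (l2norm z) ^ 2

/-- `Λ` is a top-`k` support of `v`: `|Λ| = k` and every entry of `v` inside `Λ`
dominates (in magnitude) every entry outside `Λ`. -/
def IsTopSupport {n : ℕ} (v : Fin n → ℝ) (k : ℕ) (Λ : Finset (Fin n)) : Prop :=
  Λ.card = k ∧ ∀ i ∈ Λ, ∀ j ∉ Λ, |v j| ≤ |v i|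

/-- `x'` is a least-squares estimate of `y` on the support `Λ`. -/
def IsLSE {M N : ℕ} (Φ : Matrix (Fin M) (Fin N) ℝ) (y : Fin M → ℝ)
    (Λ : Finset (Fin N)) (x' : Fin N → ℝ) : Prop :=
  suppF x' ⊆ Λ ∧ ∀ z : Fin N → ℝ, suppF z ⊆ Λ →
    l2norm (y - Φ.mulVec x') ≤ l2norm (y - Φ.mulVec z)

section Aux
open Matrix

lemma sq_l2norm {n : ℕ} (v : Fin n → ℝ) : l2norm v ^ 2 = ∑ i, (v i) ^ 2 :=
  Real.sq_sqrt (Finset.sum_nonneg fun i _ => sq_nonneg _)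

lemma l2norm_nonneg' {n : ℕ} (v : Fin n → ℝ) : 0 ≤ l2norm v := Real.sqrt_nonneg _

lemma l2norm_pos {n : ℕ} {v : Fin n → ℝ} (h : v ≠ 0) : 0 < l2norm v := by
  apply Real.sqrt_pos.mpr
  obtain ⟨i, hi⟩ : ∃ i, v i ≠ 0 := by
    by_contra hc; push_neg at hc; exact h (funext hc)
  exact Finset.sum_pos' (fun j _ => sq_nonneg _) ⟨i, Finset.mem_univ i, by positivity⟩

lemma l2norm_zero {n : ℕ} : l2norm (0 : Fin n → ℝ) = 0 := by
  simp [l2norm]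

lemma sparsity_le_of_supp {n : ℕ} {v : Fin n → ℝ} {T : Finset (Fin n)}
    (h : suppF v ⊆ T) : sparsity v ≤ T.card :=
  Finset.card_le_card h

lemma suppF_comb {n : ℕ} (c d : ℝ) (x y : Fin n → ℝ) :
    suppF (fun i => c * x i + d * y i) ⊆ suppF x ∪ suppF y := by
  intro i hi
  simp only [suppF, Finset.mem_filter, Finset.mem_union, Finset.mem_univ, true_and] at *
  by_contra hc
  push_neg at hc
  simp [hc.1, hc.2] at hi

lemma sum_sq_comb {n : ℕ} (c d : ℝ) (x y : Fin n → ℝ) :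
    ∑ i, (c * x i + d * y i) ^ 2 =
      c ^ 2 * ∑ i, (x i) ^ 2 + 2 * c * d * (x ⬝ᵥ y) + d ^ 2 * ∑ i, (y i) ^ 2 := by
  simp only [dotProduct, Finset.mul_sum, ← Finset.sum_add_distrib]
  exact Finset.sum_congr rfl fun i _ => by ring

lemma mulVec_comb {M N : ℕ} (Φ : Matrix (Fin M) (Fin N) ℝ) (c d : ℝ) (x y : Fin N → ℝ) :
    Φ.mulVec (fun i => c * x i + d * y i) =
      fun i => c * Φ.mulVec x i + d * Φ.mulVec y i := by
  funext i
  simp only [Matrix.mulVec, dotProduct, Finset.mul_sum, ← Finset.sum_add_distrib]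
  exact Finset.sum_congr rfl fun j _ => by ring

lemma polar {M N s : ℕ} {δ : ℝ} {Φ : Matrix (Fin M) (Fin N) ℝ} (hRIC : HasRIC Φ s δ)
    (x y : Fin N → ℝ) (T : Finset (Fin N)) (hx : suppF x ⊆ T) (hy : suppF y ⊆ T)
    (hT : T.card ≤ s) :
    |(Φ.mulVec x) ⬝ᵥ (Φ.mulVec y) - x ⬝ᵥ y| ≤ δ * l2norm x * l2norm y := by
  by_cases hx0 : x = 0
  · subst hx0; simp [l2norm_zero]
  by_cases hy0 : y = 0
  · subst hy0; simp [l2norm_zero]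
  have hX : 0 < l2norm x := l2norm_pos hx0
  have hY : 0 < l2norm y := l2norm_pos hy0
  set X := l2norm x
  set Y := l2norm y
  set a : Fin N → ℝ := fun i => Y * x i + X * y i with ha
  set b : Fin N → ℝ := fun i => Y * x i + (-X) * y i with hb
  have hsa : sparsity a ≤ s :=
    le_trans (sparsity_le_of_supp ((suppF_comb Y X x y).trans (Finset.union_subset hx hy))) hT
  have hsb : sparsity b ≤ s :=
    le_trans (sparsity_le_of_supp ((suppF_comb Y (-X) x y).trans (Finset.union_subset hx hy))) hT
  have Ha := (hRIC.2 a hsa)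
  have Hb := (hRIC.2 b hsb)
  have hSx : ∑ i, (x i) ^ 2 = X ^ 2 := (sq_l2norm x).symm
  have hSy : ∑ i, (y i) ^ 2 = Y ^ 2 := (sq_l2norm y).symm
  set D := x ⬝ᵥ y with hD
  set E := (Φ.mulVec x) ⬝ᵥ (Φ.mulVec y) with hE
  set SPx := ∑ i, (Φ.mulVec x i) ^ 2 with hSPx
  set SPy := ∑ i, (Φ.mulVec y i) ^ 2 with hSPy
  have hna : l2norm a ^ 2 = Y ^ 2 * X ^ 2 + 2 * Y * X * D + X ^ 2 * Y ^ 2 := by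
    rw [sq_l2norm, ha, sum_sq_comb, hSx, hSy]
  have hnb : l2norm b ^ 2 = Y ^ 2 * X ^ 2 + 2 * Y * (-X) * D + (-X) ^ 2 * Y ^ 2 := by
    rw [sq_l2norm, hb, sum_sq_comb, hSx, hSy]
  have hnpa : l2norm (Φ.mulVec a) ^ 2 =
      Y ^ 2 * SPx + 2 * Y * X * E + X ^ 2 * SPy := by
    rw [sq_l2norm, ha, mulVec_comb, sum_sq_comb]
  have hnpb : l2norm (Φ.mulVec b) ^ 2 =
      Y ^ 2 * SPx + 2 * Y * (-X) * E + (-X) ^ 2 * SPy := by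
    rw [sq_l2norm, hb, mulVec_comb, sum_sq_comb]
  rw [hna, hnpa] at Ha
  rw [hnb, hnpb] at Hb
  rw [abs_le]
  constructor
  · nlinarith [Ha.1, Hb.2, mul_pos hX hY]
  · nlinarith [Ha.2, Hb.1, mul_pos hX hY]

end Aux

open Matrix

/-- RIP consequence: `‖((I − ΦᵀΦ)u)_S‖ ≤ δ_s‖u‖` whenever
`|S ∪ supp(u)| ≤ s`. -/
theorem rip_offdiagonal_bound {M N : ℕ} (Φ : Matrix (Fin M) (Fin N) ℝ)
    (s : ℕ) (δ : ℝ) (hRIC : HasRIC Φ s δ)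
    (u : Fin N → ℝ) (S : Finset (Fin N)) (hcard : (S ∪ suppF u).card ≤ s) :
    l2norm (restr (((1 : Matrix (Fin N) (Fin N) ℝ) - Φ.transpose * Φ).mulVec u) S) ≤
      δ * l2norm u := by

  classical
  by_cases hu0 : u = 0
  · subst hu0
    simp [restr, Matrix.mulVec_zero, l2norm, l2norm_zero]
  set B := (1 : Matrix (Fin N) (Fin N) ℝ) - Φ.transpose * Φ with hB
  set w := B.mulVec u with hw
  set v := restr w S with hv
  have hU : 0 < l2norm u := l2norm_pos hu0
  -- δ ≥ 0
  have hsu : sparsity u ≤ s :=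
    le_trans (sparsity_le_of_supp (Finset.subset_union_right)) hcard
  have hδ : 0 ≤ δ := by
    have H := hRIC.2 u hsu
    nlinarith [H.1, H.2, sq_nonneg (l2norm u), pow_pos hU 2]
  -- support facts
  have hsv : suppF v ⊆ S ∪ suppF u := by
    refine Finset.Subset.trans ?_ Finset.subset_union_left
    intro i hi
    simp only [suppF, Finset.mem_filter, Finset.mem_univ, true_and, hv, restr] at hi
    by_contra hc
    simp [hc] at hi
  have hsu2 : suppF u ⊆ S ∪ suppF u := Finset.subset_union_right
  -- key identity: ‖v‖² = v⬝ᵥu − Φv⬝ᵥΦu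
  have hvw : ∑ i, (v i) ^ 2 = v ⬝ᵥ w := by
    simp only [dotProduct]
    refine Finset.sum_congr rfl fun i _ => ?_
    by_cases hiS : i ∈ S <;> simp [hv, restr, hiS, sq]
  have hdot : v ⬝ᵥ ((Φ.transpose * Φ).mulVec u) = (Φ.mulVec v) ⬝ᵥ (Φ.mulVec u) := by
    rw [← Matrix.mulVec_mulVec, Matrix.dotProduct_mulVec v, Matrix.vecMul_transpose]
  have hkey : l2norm v ^ 2 = v ⬝ᵥ u - (Φ.mulVec v) ⬝ᵥ (Φ.mulVec u) := by
    rw [sq_l2norm, hvw, hw, hB, Matrix.sub_mulVec, Matrix.one_mulVec, dotProduct_sub,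
      hdot]
  have hpol := polar hRIC v u (S ∪ suppF u) hsv hsu2 hcard
  have hineq : l2norm v ^ 2 ≤ δ * l2norm v * l2norm u := by
    have h1 : l2norm v ^ 2 ≤ |(Φ.mulVec v) ⬝ᵥ (Φ.mulVec u) - v ⬝ᵥ u| := by
      rw [hkey]; rw [abs_sub_comm]; exact le_abs_self _
    linarith [hpol, h1]
  by_cases hv0 : l2norm v = 0
  · rw [hv0]; positivity
  · have hvpos : 0 < l2norm v := lt_of_le_of_ne (l2norm_nonneg' v) (Ne.symm hv0)
    nlinarith [hineq, hvpos]
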